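/- Let H be a connected simple graph on a finite vertex set V with |V| ≥ 2, and let Δ ≥ 1 be the maximum degree of H. Let γ(H) denote the minimum cardinality of a dominating set of H. Then there exists a connected dominating set D of H with |D| ≤ 2·(1 + H(Δ))·γ(H), where H(k) = ∑_{i=1}^{k} 1/i is the harmonic number. -/

import Mathlib

namespace CDSAux

open SimpleGraph Finset

attribute [local instance] Classical.propDecidable

variable {V : Type*} [Fintype V] [DecidableEq V] (H : SimpleGraph V)

/-- One step of adjacency inside the set `D`. -/
def Step (D : Finset V) (a b : V) : Prop := H.Adj a b ∧ a ∈ D ∧ b ∈ D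

/-- Reachability inside `D`. -/
def R (D : Finset V) : V → V → Prop := Relation.ReflTransGen (Step H D)

variable {H}

lemma R.symm {D : Finset V} {u v : V} (h : R H D u v) : R H D v u := by
  have hs : Symmetric (Step H D) := fun a b hab => ⟨hab.1.symm, hab.2.2, hab.2.1⟩
  haveI : Std.Symm (Step H D) := ⟨hs⟩
  exact Std.Symm.symm (r := Relation.ReflTransGen (Step H D)) _ _ h

lemma R.trans {D : Finset V} {u v w : V} (h : R H D u v) (h' : R H D v w) : R H D u w :=
  Relation.ReflTransGen.trans h h'

lemma R.mono {D D' : Finset V} (hDD : D ⊆ D') {u v : V} (h : R H D u v) : R H D' u v :=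
  Relation.ReflTransGen.mono (r := Step H D) (p := Step H D')
    (fun a b (hab : Step H D a b) => (⟨hab.1, hDD hab.2.1, hDD hab.2.2⟩ : Step H D' a b)) u v h

variable (H)

/-- The `R`-class of `u` inside `D`. -/
noncomputable def classOf (D : Finset V) (u : V) : Finset V :=
  D.filter (fun v => R H D u v)

/-- The number of components of the graph induced on `D`. -/
noncomputable def nComp (D : Finset V) : ℕ := (D.image (classOf H D)).card

lemma mem_classOf {D : Finset V} {u v : V} :
    v ∈ classOf H D u ↔ v ∈ D ∧ R H D u v := Finset.mem_filter

variable {H}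

lemma classOf_eq_of_R {D : Finset V} {u w : V} (h : R H D u w) :
    classOf H D u = classOf H D w := by
  ext v
  simp only [mem_classOf]
  exact ⟨fun hv => ⟨hv.1, h.symm.trans hv.2⟩, fun hv => ⟨hv.1, h.trans hv.2⟩⟩

lemma R_of_classOf_eq {D : Finset V} {u w : V} (hw : w ∈ D)
    (h : classOf H D u = classOf H D w) : R H D u w := by
  have hww : w ∈ classOf H D w := (mem_classOf H).mpr ⟨hw, Relation.ReflTransGen.refl⟩
  rw [← h] at hww
  exact ((mem_classOf H).mp hww).2

/-- Generic counting lemma: if `g` factors through `f` on `s`, and `g` identifies two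
elements that `f` separates, then `s.image g` is strictly smaller than `s.image f`. -/
lemma card_image_lt_card_image {α β : Type*} [DecidableEq β] {s : Finset α} {f g : α → β}
    (hfac : ∀ x ∈ s, ∀ y ∈ s, f x = f y → g x = g y)
    {u w : α} (hu : u ∈ s) (hw : w ∈ s) (hne : f u ≠ f w) (heq : g u = g w) :
    (s.image g).card < (s.image f).card := by
  classical
  set ψ : β → β := fun b => if h : ∃ x, x ∈ s ∧ f x = b then g h.choose else b with hψ
  have key : ∀ x ∈ s, ψ (f x) = g x := by
    intro x hx
    have h : ∃ y, y ∈ s ∧ f y = f x := ⟨x, hx, rfl⟩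
    simp only [hψ, dif_pos h]
    exact hfac _ h.choose_spec.1 _ hx h.choose_spec.2
  have hsurj : Set.SurjOn ψ (((s.image f).erase (f w) : Finset β) : Set β)
      ((s.image g : Finset β) : Set β) := by
    intro c hc
    rw [Finset.mem_coe, Finset.mem_image] at hc
    obtain ⟨x, hx, hgx⟩ := hc
    by_cases hgu : g x = g u
    · refine ⟨f u, ?_, ?_⟩
      · rw [Finset.mem_coe, Finset.mem_erase]
        exact ⟨hne, Finset.mem_image_of_mem f hu⟩
      · rw [key u hu, ← hgx, hgu]
    · refine ⟨f x, ?_, ?_⟩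
      · rw [Finset.mem_coe, Finset.mem_erase]
        refine ⟨fun hfx => ?_, Finset.mem_image_of_mem f hx⟩
        exact hgu ((hfac x hx w hw hfx).trans heq.symm)
      · rw [key x hx, hgx]
  have hle := Finset.card_le_card_of_surjOn ψ hsurj
  have hfw : f w ∈ s.image f := Finset.mem_image_of_mem f hw
  have hpos : 0 < (s.image f).card := Finset.card_pos.mpr ⟨_, hfw⟩
  have herase := Finset.card_erase_of_mem hfw
  omega

lemma reachable_induce_of_R {D : Finset V} {x y : V} (h : R H D x y) (hx : x ∈ D) :
    ∀ hy : y ∈ (D : Set V), (H.induce (D : Set V)).Reachable ⟨x, hx⟩ ⟨y, hy⟩ := by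
  induction h with
  | refl => intro hy; exact SimpleGraph.Reachable.refl _
  | tail _ hstep ih =>
      intro hy
      obtain ⟨hadj, hc, hyD⟩ := hstep
      have h1 := ih (by exact hc)
      refine h1.trans (SimpleGraph.Adj.reachable ?_)
      exact hadj

lemma connected_induce_of_nComp_le_one {D : Finset V} (hne : D.Nonempty)
    (h1 : nComp H D ≤ 1) : (H.induce (D : Set V)).Connected := by
  rw [SimpleGraph.connected_iff]
  constructor
  · rintro ⟨a, ha⟩ ⟨b, hb⟩
    have ha' : a ∈ D := ha
    have hb' : b ∈ D := hb
    have hcl : classOf H D a = classOf H D b := by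
      exact Finset.card_le_one.mp h1 _ (Finset.mem_image_of_mem _ ha') _
        (Finset.mem_image_of_mem _ hb')
    have hr : R H D a b := R_of_classOf_eq hb' hcl
    exact reachable_induce_of_R hr ha' hb
  · obtain ⟨x, hx⟩ := hne
    exact ⟨⟨x, hx⟩⟩

lemma dist_getVert_le (hconn : H.Connected) {u w : V} (p : H.Walk u w) (i : ℕ) :
    H.dist u (p.getVert i) ≤ i := by
  induction i with
  | zero => simp [p.getVert_zero, SimpleGraph.dist_self]
  | succ n ih =>
      by_cases h : n < p.length
      · have hadj := p.adj_getVert_succ h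
        have h1 : H.dist (p.getVert n) (p.getVert (n + 1)) ≤ 1 := by
          simpa using SimpleGraph.dist_le hadj.toWalk
        have htri := hconn.dist_triangle (u := u) (v := p.getVert n) (w := p.getVert (n + 1))
        omega
      · push_neg at h
        have heq : p.getVert (n + 1) = p.getVert n := by
          rw [p.getVert_of_length_le h, p.getVert_of_length_le (h.trans (Nat.le_succ n))]
        rw [heq]
        exact ih.trans (Nat.le_succ n)

lemma dist_getVert_to_end_le (hconn : H.Connected) {u w : V} (p : H.Walk u w) {i : ℕ}
    (hi : i ≤ p.length) : H.dist (p.getVert i) w ≤ p.length - i := by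
  have h := dist_getVert_le hconn p.reverse (p.length - i)
  rw [SimpleGraph.Walk.getVert_reverse] at h
  have h2 : p.length - (p.length - i) = i := by omega
  rw [h2] at h
  rwa [SimpleGraph.dist_comm]

lemma exists_close_pair (hconn : H.Connected) (D : Finset V)
    (hdom : ∀ v : V, v ∈ D ∨ ∃ u ∈ D, H.Adj u v) :
    ∀ k : ℕ, ∀ u w : V, u ∈ D → w ∈ D → ¬ R H D u w → H.dist u w ≤ k →
      ∃ u' ∈ D, ∃ w' ∈ D, ¬ R H D u' w' ∧ H.dist u' w' ≤ 3 := by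
  intro k
  induction k with
  | zero =>
      intro u w hu hw hnr hd
      have : u = w := hconn.dist_eq_zero_iff.mp (by omega)
      exact absurd (this ▸ Relation.ReflTransGen.refl) hnr
  | succ n ih =>
      intro u w hu hw hnr hd
      by_cases h3 : H.dist u w ≤ 3
      · exact ⟨u, hu, w, hw, hnr, h3⟩
      · push_neg at h3
        obtain ⟨p, hp⟩ := (hconn u w).exists_walk_length_eq_dist
        set x := p.getVert 2 with hxdef
        have hd2 : H.dist u x ≤ 2 := dist_getVert_le hconn p 2
        have hdx : H.dist x w ≤ p.length - 2 := dist_getVert_to_end_le hconn p (by omega)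
        obtain ⟨d, hdD, hdx1⟩ : ∃ d ∈ D, H.dist d x ≤ 1 := by
          rcases hdom x with hxD | ⟨d, hdD, hadj⟩
          · exact ⟨x, hxD, by simp [SimpleGraph.dist_self]⟩
          · exact ⟨d, hdD, by simpa using SimpleGraph.dist_le hadj.toWalk⟩
        by_cases hud : R H D u d
        · have hndw : ¬ R H D d w := fun hr => hnr (hud.trans hr)
          apply ih d w hdD hw hndw
          have htri := hconn.dist_triangle (u := d) (v := x) (w := w)
          omega
        · apply ih u d hu hdD hud
          have htri := hconn.dist_triangle (u := u) (v := x) (w := d)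
          have hcomm : H.dist x d = H.dist d x := SimpleGraph.dist_comm
          omega

lemma merge_step (hconn : H.Connected) {D : Finset V}
    (hdom : ∀ v : V, v ∈ D ∨ ∃ u ∈ D, H.Adj u v) (hnc : 1 < nComp H D) :
    ∃ D' : Finset V, D ⊆ D' ∧ D'.card ≤ D.card + 2 ∧ nComp H D' < nComp H D := by
  -- find two elements of D in different classes
  obtain ⟨e1, he1, e2, he2, hee⟩ := Finset.one_lt_card.mp hnc
  rw [Finset.mem_image] at he1 he2
  obtain ⟨a, haD, ha⟩ := he1
  obtain ⟨b, hbD, hb⟩ := he2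
  have hnab : ¬ R H D a b := fun hr => hee (by rw [← ha, ← hb, classOf_eq_of_R hr])
  obtain ⟨u, hu, w, hw, hnr, hd3⟩ :=
    exists_close_pair hconn D hdom (H.dist a b) a b haD hbD hnab le_rfl
  obtain ⟨q, hq⟩ := (hconn u w).exists_walk_length_eq_dist
  have huw : u ≠ w := fun h => hnr (h ▸ Relation.ReflTransGen.refl)
  have hlpos : 0 < q.length := by
    rw [hq]; exact hconn.pos_dist_of_ne huw
  have hlen3 : q.length ≤ 3 := by omega
  set g1 := q.getVert 1 with hg1
  set g2 := q.getVert 2 with hg2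
  refine ⟨insert g1 (insert g2 D), ?_, ?_, ?_⟩
  · intro v hv; exact Finset.mem_insert_of_mem (Finset.mem_insert_of_mem hv)
  · calc (insert g1 (insert g2 D)).card ≤ (insert g2 D).card + 1 :=
        Finset.card_insert_le _ _
      _ ≤ D.card + 2 := by have := Finset.card_insert_le g2 D; omega
  · set D' := insert g1 (insert g2 D) with hD'
    have hsub : D ⊆ D' := fun v hv =>
      Finset.mem_insert_of_mem (Finset.mem_insert_of_mem hv)
    have huD' : u ∈ D' := hsub hu
    have hwD' : w ∈ D' := hsub hw
    have hg1D' : g1 ∈ D' := Finset.mem_insert_self _ _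
    have hg2D' : g2 ∈ D' := Finset.mem_insert_of_mem (Finset.mem_insert_self _ _)
    -- chain u - g1 - g2 - w inside D'
    have hRug1 : R H D' u g1 := by
      have hadj : H.Adj u g1 := by
        have := q.adj_getVert_succ hlpos
        rwa [q.getVert_zero] at this
      exact Relation.ReflTransGen.single ⟨hadj, huD', hg1D'⟩
    have hRug2 : R H D' u g2 := by
      by_cases h : 1 < q.length
      · exact hRug1.tail ⟨q.adj_getVert_succ h, hg1D', hg2D'⟩
      · push_neg at h
        have : g2 = g1 := by
          rw [hg2, hg1, q.getVert_of_length_le h, q.getVert_of_length_le (h.trans one_le_two)]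
        rw [this]; exact hRug1
    have hRuw : R H D' u w := by
      by_cases h : 2 < q.length
      · have h3 : q.length = 3 := by omega
        have hadj : H.Adj g2 w := by
          have := q.adj_getVert_succ h
          rwa [show 2 + 1 = q.length from h3.symm, q.getVert_length] at this
        exact hRug2.tail ⟨hadj, hg2D', hwD'⟩
      · push_neg at h
        have : w = g2 := by rw [hg2, q.getVert_of_length_le h]
        rw [this] at *
        exact hRug2
    -- the image of classOf over D' equals the image over D
    have himg : D'.image (classOf H D') = D.image (classOf H D') := by
      apply Finset.Subset.antisymm
      · intro c hc
        rw [Finset.mem_image] at hc ⊢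
        obtain ⟨v, hv, hvc⟩ := hc
        rw [hD', Finset.mem_insert, Finset.mem_insert] at hv
        rcases hv with h | h | h
        · refine ⟨u, hu, ?_⟩
          rw [← hvc, h]
          exact classOf_eq_of_R hRug1
        · refine ⟨u, hu, ?_⟩
          rw [← hvc, h]
          exact classOf_eq_of_R hRug2
        · exact ⟨v, h, hvc⟩
      · exact Finset.image_subset_image hsub
    have hfac : ∀ x ∈ D, ∀ y ∈ D, classOf H D x = classOf H D y →
        classOf H D' x = classOf H D' y := by
      intro x hx y hy hxy
      exact classOf_eq_of_R ((R_of_classOf_eq hy hxy).mono hsub)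
    have hfne : classOf H D u ≠ classOf H D w :=
      fun h => hnr (R_of_classOf_eq hw h)
    have hgeq : classOf H D' u = classOf H D' w := classOf_eq_of_R hRuw
    have := card_image_lt_card_image hfac hu hw hfne hgeq
    unfold nComp
    rw [himg]
    exact this

lemma main_aux (hconn : H.Connected) :
    ∀ n : ℕ, ∀ D : Finset V, nComp H D ≤ n → D.Nonempty →
      (∀ v : V, v ∈ D ∨ ∃ u ∈ D, H.Adj u v) →
      ∃ D' : Finset V, D ⊆ D' ∧ (∀ v : V, v ∈ D' ∨ ∃ u ∈ D', H.Adj u v) ∧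
        (H.induce (D' : Set V)).Connected ∧ D'.card ≤ D.card + 2 * (nComp H D - 1) := by
  intro n
  induction n with
  | zero =>
      intro D h0 hne hdom
      have : 0 < nComp H D := Finset.card_pos.mpr (hne.image _)
      omega
  | succ n ih =>
      intro D hn hne hdom
      by_cases h1 : nComp H D ≤ 1
      · exact ⟨D, Finset.Subset.refl D, hdom,
          connected_induce_of_nComp_le_one hne h1, by omega⟩
      · push_neg at h1
        obtain ⟨D', hsub, hcard, hlt⟩ := merge_step hconn hdom h1
        have hdom' : ∀ v : V, v ∈ D' ∨ ∃ u ∈ D', H.Adj u v := by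
          intro v
          rcases hdom v with h | ⟨u, hu, ha⟩
          · exact Or.inl (hsub h)
          · exact Or.inr ⟨u, hsub hu, ha⟩
        obtain ⟨D'', hsub', hdom'', hconn'', hcard''⟩ :=
          ih D' (by omega) (hne.mono hsub) hdom'
        refine ⟨D'', hsub.trans hsub', hdom'', hconn'', ?_⟩
        omega

lemma one_le_harmonic : ∀ n : ℕ, 1 ≤ n → (1 : ℚ) ≤ harmonic n := by
  intro n hn
  induction n with
  | zero => omega
  | succ m ih =>
      rw [harmonic_succ]
      rcases Nat.eq_zero_or_pos m with h | h
      · subst h; norm_num [harmonic_zero]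
      · have h1 := ih h
        have h2 : (0 : ℚ) ≤ (↑(m + 1))⁻¹ := by positivity
        linarith

end CDSAux

/-- Let `H` be a connected simple graph on a finite vertex set `V` with
`|V| ≥ 2`, and let `Δ ≥ 1` be the maximum degree of `H`. Let `γ(H)` be the minimum
cardinality of a dominating set of `H`. Then there exists a connected dominating set `D` of
`H` with `|D| ≤ 2 · (1 + H(Δ)) · γ(H)`, where `H(k)` is the `k`-th harmonic number. -/
theorem connected_dominating_set_ratio
    {V : Type*} [Fintype V] [DecidableEq V] (H : SimpleGraph V) [DecidableRel H.Adj]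
    (hconn : H.Connected) (hcard : 2 ≤ Fintype.card V)
    (Δ : ℕ) (hΔ : Δ = H.maxDegree) (hΔpos : 1 ≤ Δ)
    (D₀ : Finset V) (hD₀dom : ∀ v : V, v ∈ D₀ ∨ ∃ u ∈ D₀, H.Adj u v)
    (hD₀min : ∀ D' : Finset V, (∀ v : V, v ∈ D' ∨ ∃ u ∈ D', H.Adj u v) →
        D₀.card ≤ D'.card) :
    ∃ D : Finset V, (∀ v : V, v ∈ D ∨ ∃ u ∈ D, H.Adj u v) ∧
      (H.induce (D : Set V)).Connected ∧
      (D.card : ℚ) ≤ 2 * (1 + harmonic Δ) * (D₀.card : ℚ) := by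
  have hne : D₀.Nonempty := by
    have hV : Nonempty V := Fintype.card_pos_iff.mp (by omega)
    obtain ⟨v⟩ := hV
    rcases hD₀dom v with h | ⟨u, hu, _⟩
    · exact ⟨v, h⟩
    · exact ⟨u, hu⟩
  obtain ⟨D, hsub, hdom, hconnD, hcardD⟩ :=
    CDSAux.main_aux hconn (CDSAux.nComp H D₀) D₀ le_rfl hne hD₀dom
  refine ⟨D, hdom, hconnD, ?_⟩
  have h1 : CDSAux.nComp H D₀ ≤ D₀.card := Finset.card_image_le
  have h2 : D.card ≤ 3 * D₀.card := by omega
  have hharm : (1 : ℚ) ≤ harmonic Δ := CDSAux.one_le_harmonic Δ hΔpos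
  have hc0 : (0 : ℚ) ≤ (D₀.card : ℚ) := by positivity
  have h3 : (D.card : ℚ) ≤ 3 * (D₀.card : ℚ) := by exact_mod_cast h2
  nlinarith
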